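/- arXiv:2402.18358 — 3 statements merged into one kernel-verified Lean document; each statement's English description precedes it below -/
import Mathlib

section
/- Let δ, ε be real and κ a nonzero real number, and let H(X,Y) = (δ/2)(X²+Y²) + (Ω₂/8)(X²+Y²)² + (A/4)(X⁴ − 6X²Y² + Y⁴) + (ε/2)X with Ω₂ = −(1+3κ)/8 and A = (1−κ)/16. A point (X,Y) with Y ≠ 0 is a critical point of H if and only if Y² = (4δ − X²)/κ and X satisfies the cubic equation −((κ²−1)/(4κ))X³ + (δ(κ−1)/κ)X + ε/2 = 0. -/
/-- For κ ≠ 0, a point (X,Y) with Y ≠ 0 is a critical point of the planar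
    Hamiltonian H if and only if Y² = (4δ − X²)/κ and X satisfies the cubic
    −((κ²−1)/(4κ))X³ + (δ(κ−1)/κ)X + ε/2 = 0. -/
theorem stmt_4 (δ ε κ Ω₂ A : ℝ) (hκ : κ ≠ 0)
    (hΩ₂ : Ω₂ = -(1 + 3 * κ) / 8) (hA : A = (1 - κ) / 16)
    (H : ℝ → ℝ → ℝ)
    (hH : ∀ X Y : ℝ, H X Y =
      δ / 2 * (X ^ 2 + Y ^ 2) + Ω₂ / 8 * (X ^ 2 + Y ^ 2) ^ 2 +
        A / 4 * (X ^ 4 - 6 * X ^ 2 * Y ^ 2 + Y ^ 4) + ε / 2 * X)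
    (X Y : ℝ) (hY : Y ≠ 0) :
    (deriv (fun x : ℝ => H x Y) X = 0 ∧ deriv (fun y : ℝ => H X y) Y = 0) ↔
      (Y ^ 2 = (4 * δ - X ^ 2) / κ ∧
        -((κ ^ 2 - 1) / (4 * κ)) * X ^ 3 + δ * (κ - 1) / κ * X + ε / 2 = 0) := by
  have hfx : (fun x : ℝ => H x Y) = fun x : ℝ =>
      δ / 2 * (x ^ 2 + Y ^ 2) + Ω₂ / 8 * (x ^ 2 + Y ^ 2) ^ 2 +
        A / 4 * (x ^ 4 - 6 * x ^ 2 * Y ^ 2 + Y ^ 4) + ε / 2 * x :=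
    funext fun x => hH x Y
  have hfy : (fun y : ℝ => H X y) = fun y : ℝ =>
      δ / 2 * (X ^ 2 + y ^ 2) + Ω₂ / 8 * (X ^ 2 + y ^ 2) ^ 2 +
        A / 4 * (X ^ 4 - 6 * X ^ 2 * y ^ 2 + y ^ 4) + ε / 2 * X :=
    funext fun y => hH X y
  have h1 : HasDerivAt (fun x : ℝ => x ^ 2 + Y ^ 2) ((2 : ℕ) * X ^ 1) X :=
    (hasDerivAt_pow 2 X).add_const _
  have hDX : HasDerivAt (fun x : ℝ =>
      δ / 2 * (x ^ 2 + Y ^ 2) + Ω₂ / 8 * (x ^ 2 + Y ^ 2) ^ 2 +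
        A / 4 * (x ^ 4 - 6 * x ^ 2 * Y ^ 2 + Y ^ 4) + ε / 2 * x)
      (δ / 2 * ((2 : ℕ) * X ^ 1)
        + Ω₂ / 8 * ((2 : ℕ) * (X ^ 2 + Y ^ 2) ^ 1 * ((2 : ℕ) * X ^ 1))
        + A / 4 * ((4 : ℕ) * X ^ 3 - 6 * ((2 : ℕ) * X ^ 1) * Y ^ 2)
        + ε / 2 * 1) X := by
    exact (((h1.const_mul (δ / 2)).add ((h1.pow 2).const_mul (Ω₂ / 8))).add
      ((((hasDerivAt_pow 4 X).sub
        (((hasDerivAt_pow 2 X).const_mul 6).mul_const (Y ^ 2))).add_const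
        (Y ^ 4)).const_mul (A / 4))).add ((hasDerivAt_id X).const_mul (ε / 2))
  have h2 : HasDerivAt (fun y : ℝ => X ^ 2 + y ^ 2) ((2 : ℕ) * Y ^ 1) Y :=
    (hasDerivAt_pow 2 Y).const_add _
  have hDY : HasDerivAt (fun y : ℝ =>
      δ / 2 * (X ^ 2 + y ^ 2) + Ω₂ / 8 * (X ^ 2 + y ^ 2) ^ 2 +
        A / 4 * (X ^ 4 - 6 * X ^ 2 * y ^ 2 + y ^ 4) + ε / 2 * X)
      (δ / 2 * ((2 : ℕ) * Y ^ 1)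
        + Ω₂ / 8 * ((2 : ℕ) * (X ^ 2 + Y ^ 2) ^ 1 * ((2 : ℕ) * Y ^ 1))
        + A / 4 * (-(6 * X ^ 2 * ((2 : ℕ) * Y ^ 1)) + (4 : ℕ) * Y ^ 3)) Y := by
    exact (((h2.const_mul (δ / 2)).add ((h2.pow 2).const_mul (Ω₂ / 8))).add
      (((((hasDerivAt_pow 2 Y).const_mul (6 * X ^ 2)).const_sub (X ^ 4)).add
        (hasDerivAt_pow 4 Y)).const_mul (A / 4))).add_const (ε / 2 * X)
  rw [hfx, hfy, hDX.deriv, hDY.deriv]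
  subst hΩ₂ hA
  push_cast
  constructor
  · rintro ⟨hx, hy⟩
    have key : Y * (δ - X ^ 2 / 4 - κ * Y ^ 2 / 4) = 0 := by linear_combination hy
    have h3 : δ - X ^ 2 / 4 - κ * Y ^ 2 / 4 = 0 :=
      (mul_eq_zero.mp key).resolve_left hY
    constructor
    · rw [eq_div_iff hκ]; linear_combination -4 * h3
    · have hinv : κ * κ⁻¹ = 1 := mul_inv_cancel₀ hκ
      linear_combination hx - X / κ * h3 + (X * δ - X * Y ^ 2 / 4 - κ * X ^ 3 / 4) * hinv
  · rintro ⟨hY2, hcub⟩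
    rw [eq_div_iff hκ] at hY2
    have hinv : κ * κ⁻¹ = 1 := mul_inv_cancel₀ hκ
    constructor
    · linear_combination hcub - X / (4 * κ) * hY2 + (-(δ * X) + X * Y ^ 2 / 4 + κ * X ^ 3 / 4) * hinv
    · linear_combination -(Y / 4) * hY2
end

section
/- Let 0 < κ < 1 and ε > 0 be real numbers, and let Q(X) = −((κ²−1)/(4κ))X³ + (δ(κ−1)/κ)X + ε/2. If δ > (3/4)[κ²(κ+1)/(κ−1)²]^{1/3} ε^{2/3}, then Q has exactly three distinct real roots; if δ < (3/4)[κ²(κ+1)/(κ−1)²]^{1/3} ε^{2/3}, then Q has exactly one real root. -/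
open Set

private lemma pair_rel {p q x y : ℝ} (hx : x^3+p*x+q = 0) (hy : y^3+p*y+q = 0)
    (hxy : x ≠ y) : x^2+x*y+y^2+p = 0 := by
  have h : (x - y) * (x^2+x*y+y^2+p) = 0 := by linear_combination hx - hy
  rcases mul_eq_zero.mp h with h | h
  · exact absurd (sub_eq_zero.mp h) hxy
  · exact h

private lemma roots_unique {p q : ℝ} (hd : 0 < 4*p^3+27*q^2) (x y : ℝ)
    (hx : x^3+p*x+q = 0) (hy : y^3+p*y+q = 0) : x = y := by
  by_contra hxy
  have h1 := pair_rel hx hy hxy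
  have hp : p = -(x^2+x*y+y^2) := by linarith
  have hq : q = x^2*y+x*y^2 := by linear_combination hx - x * h1
  rw [hp, hq] at hd
  nlinarith [sq_nonneg ((x-y)*(x+2*y)*(2*x+y))]

private lemma sum_three {p q x y z : ℝ} (hx : x^3+p*x+q = 0) (hy : y^3+p*y+q = 0)
    (hz : z^3+p*z+q = 0) (hxy : x ≠ y) (hxz : x ≠ z) (hyz : y ≠ z) : x+y+z = 0 := by
  have h1 := pair_rel hx hy hxy
  have h2 := pair_rel hx hz hxz
  have h : (y - z)*(x+y+z) = 0 := by linear_combination h1 - h2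
  rcases mul_eq_zero.mp h with h | h
  · exact absurd (sub_eq_zero.mp h) hyz
  · exact h

private lemma count_one {p q : ℝ} (hq : 0 < q) (hd : 0 < 4*p^3+27*q^2) :
    {x : ℝ | x^3+p*x+q = 0}.ncard = 1 := by
  set A : ℝ := 1 + |p| + |q| with hA
  have hA1 : (1:ℝ) ≤ A := by
    have := abs_nonneg p; have := abs_nonneg q; simp only [hA]; linarith
  have hApos : (0:ℝ) < A := by linarith
  have e2 : A ≤ A^2 := by nlinarith
  have e3 : 1+|q| ≤ A^2 - |p| := by simp only [hA]; nlinarith [abs_nonneg p, abs_nonneg q]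
  have e4 : A*(1+|q|) ≤ A*(A^2-|p|) := mul_le_mul_of_nonneg_left e3 hApos.le
  have e5 : 1+|q| ≤ A*(1+|q|) := by nlinarith [abs_nonneg q]
  have e6 : (-|p|)*A ≤ p*A := mul_le_mul_of_nonneg_right (neg_abs_le p) hApos.le
  have hfa : (-A)^3 + p*(-A) + q < 0 := by nlinarith [le_abs_self q]
  have hf0 : (0:ℝ) ∈ Set.Ioo ((-A)^3 + p*(-A) + q) ((0:ℝ)^3+p*0+q) := by
    constructor
    · exact hfa
    · simpa using hq
  have hc : ContinuousOn (fun x : ℝ => x^3+p*x+q) (Set.Icc (-A) 0) := by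
    exact Continuous.continuousOn (by fun_prop)
  have hAle : -A ≤ (0:ℝ) := by linarith
  obtain ⟨r, _, hr0⟩ := intermediate_value_Ioo hAle hc hf0
  rw [Set.ncard_eq_one]
  exact ⟨r, Set.eq_singleton_iff_unique_mem.mpr ⟨hr0, fun y hy => roots_unique hd y r hy hr0⟩⟩

set_option maxHeartbeats 1000000 in
private lemma count_three {p q : ℝ} (hq : 0 < q) (hd : 4*p^3+27*q^2 < 0) :
    {x : ℝ | x^3+p*x+q = 0}.ncard = 3 := by
  have hp : p < 0 := by
    by_contra h
    push_neg at h
    nlinarith [pow_nonneg h 3, sq_nonneg q]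
  set m : ℝ := Real.sqrt (-p/3) with hmdef
  have hm2 : m^2 = -p/3 := Real.sq_sqrt (by linarith)
  have hm0 : 0 < m := Real.sqrt_pos.mpr (by linarith)
  set A : ℝ := 1 + |p| + |q| with hA
  have hA1 : (1:ℝ) ≤ A := by
    have := abs_nonneg p; have := abs_nonneg q; simp only [hA]; linarith
  have hApos : (0:ℝ) < A := by linarith
  have habsp : p ≤ |p| := le_abs_self p
  have habsp' : -|p| ≤ p := neg_abs_le p
  have habsq : q ≤ |q| := le_abs_self q
  have e2 : A ≤ A^2 := by nlinarith
  have e3 : 1+|q| ≤ A^2 - |p| := by simp only [hA]; nlinarith [abs_nonneg p, abs_nonneg q]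
  have e4 : A*(1+|q|) ≤ A*(A^2-|p|) := mul_le_mul_of_nonneg_left e3 hApos.le
  have e5 : 1+|q| ≤ A*(1+|q|) := by nlinarith [abs_nonneg q]
  have e6 : (-|p|)*A ≤ p*A := mul_le_mul_of_nonneg_right habsp' hApos.le
  have hmA : m < A := by
    have h1 : -p ≤ |p| := by linarith
    nlinarith [sq_nonneg (m-1), abs_nonneg q]
  have hfa : (-A)^3 + p*(-A) + q < 0 := by nlinarith
  have hfA : 0 < A^3 + p*A + q := by nlinarith
  have hpm : p = -3*m^2 := by linarith
  have hq2 : q^2 < 4*m^6 := by rw [hpm] at hd; nlinarith [hd]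
  have hq3 : q < 2*m^3 := by nlinarith [hq2, pow_pos hm0 3, hq]
  have hpm3 : p*m = -3*m^3 := by rw [hpm]; ring
  have hfm : m^3 + p*m + q < 0 := by nlinarith [hpm3, hq3]
  have hfnm : 0 < (-m)^3 + p*(-m) + q := by nlinarith [hpm3, hq, pow_pos hm0 3]
  have hc : Continuous (fun x : ℝ => x^3+p*x+q) := by fun_prop
  obtain ⟨r1, hr1mem, hr1⟩ := intermediate_value_Ioo (by linarith : -A ≤ -m)
    (hc.continuousOn) ⟨hfa, hfnm⟩
  obtain ⟨r2, hr2mem, hr2⟩ := intermediate_value_Ioo' (by linarith : -m ≤ m)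
    (hc.continuousOn) ⟨hfm, hfnm⟩
  obtain ⟨r3, hr3mem, hr3⟩ := intermediate_value_Ioo (by linarith : m ≤ A)
    (hc.continuousOn) ⟨hfm, hfA⟩
  have h12 : r1 ≠ r2 := by
    intro h; rw [h] at hr1mem; exact absurd hr2mem.1 (not_lt.mpr hr1mem.2.le)
  have h13 : r1 ≠ r3 := by
    intro h; rw [h] at hr1mem
    have := hr1mem.2; have := hr3mem.1; linarith
  have h23 : r2 ≠ r3 := by
    intro h; rw [h] at hr2mem; exact absurd hr3mem.1 (not_lt.mpr hr2mem.2.le)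
  rw [Set.ncard_eq_three]
  refine ⟨r1, r2, r3, h12, h13, h23, ?_⟩
  ext x
  simp only [Set.mem_setOf_eq, Set.mem_insert_iff, Set.mem_singleton_iff]
  constructor
  · intro hx
    by_contra hcon
    push_neg at hcon
    obtain ⟨hx1, hx2, hx3⟩ := hcon
    have s1 : x + r1 + r2 = 0 := sum_three hx hr1 hr2 hx1 hx2 h12
    have s2 : x + r1 + r3 = 0 := sum_three hx hr1 hr3 hx1 hx3 h13
    exact h23 (by linarith)
  · rintro (rfl | rfl | rfl) <;> assumption

set_option maxHeartbeats 1000000 in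
/-- For 0 < κ < 1 and ε > 0, the cubic Q(X) = −((κ²−1)/(4κ))X³ + (δ(κ−1)/κ)X + ε/2
    has exactly three distinct real roots if δ > (3/4)[κ²(κ+1)/(κ−1)²]^{1/3} ε^{2/3},
    and exactly one real root if δ < (3/4)[κ²(κ+1)/(κ−1)²]^{1/3} ε^{2/3}. -/
theorem stmt_5 (κ ε δ : ℝ) (hκ0 : 0 < κ) (hκ1 : κ < 1) (hε : 0 < ε) :
    (δ > (3 / 4) * (κ ^ 2 * (κ + 1) / (κ - 1) ^ 2) ^ ((1 : ℝ) / 3) * ε ^ ((2 : ℝ) / 3) →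
      {X : ℝ | -((κ ^ 2 - 1) / (4 * κ)) * X ^ 3 + δ * (κ - 1) / κ * X + ε / 2 = 0}.ncard = 3) ∧
    (δ < (3 / 4) * (κ ^ 2 * (κ + 1) / (κ - 1) ^ 2) ^ ((1 : ℝ) / 3) * ε ^ ((2 : ℝ) / 3) →
      {X : ℝ | -((κ ^ 2 - 1) / (4 * κ)) * X ^ 3 + δ * (κ - 1) / κ * X + ε / 2 = 0}.ncard = 1) := by
  have h1κ : (0:ℝ) < 1 + κ := by linarith
  have h1κ' : (0:ℝ) < 1 - κ := by linarith
  have h1κ2 : (0:ℝ) < 1 - κ^2 := by nlinarith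
  have hκne : κ ≠ 0 := ne_of_gt hκ0
  have h1κne : (1:ℝ) + κ ≠ 0 := ne_of_gt h1κ
  have h1κ2ne : (1:ℝ) - κ^2 ≠ 0 := ne_of_gt h1κ2
  have hκ1ne : κ - 1 ≠ 0 := by intro h; apply absurd (by linarith : κ = 1); intro; linarith
  have h2 : (0:ℝ) < (κ-1)^2 := by positivity
  have hq : 0 < 2*κ*ε/(1-κ^2) := by positivity
  have hsetEq : {X : ℝ | -((κ ^ 2 - 1) / (4 * κ)) * X ^ 3 + δ * (κ - 1) / κ * X + ε / 2 = 0}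
      = {x : ℝ | x^3 + (-4*δ/(1+κ))*x + 2*κ*ε/(1-κ^2) = 0} := by
    ext x
    simp only [Set.mem_setOf_eq]
    rw [show -((κ ^ 2 - 1) / (4 * κ)) * x ^ 3 + δ * (κ - 1) / κ * x + ε / 2
        = ((1-κ^2)/(4*κ)) * (x^3 + (-4*δ/(1+κ))*x + 2*κ*ε/(1-κ^2)) by field_simp; ring]
    constructor
    · intro h
      rcases mul_eq_zero.mp h with h | h
      · exact absurd h (by positivity)
      · exact h
    · intro h; rw [h, mul_zero]
  set c : ℝ := κ ^ 2 * (κ + 1) / (κ - 1) ^ 2 with hcdef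
  have hc0 : 0 < c := by rw [hcdef]; positivity
  set T : ℝ := 3 / 4 * c ^ ((1:ℝ) / 3) * ε ^ ((2:ℝ) / 3) with hTdef
  have hT0 : 0 < T := by rw [hTdef]; positivity
  have hT3 : T^3 = 27/64 * c * ε^2 := by
    have ha : (c ^ ((1:ℝ)/3))^(3:ℕ) = c := by
      rw [← Real.rpow_natCast (c ^ ((1:ℝ)/3)) 3, ← Real.rpow_mul hc0.le]
      norm_num
    have hb : (ε ^ ((2:ℝ)/3))^(3:ℕ) = ε^2 := by
      rw [← Real.rpow_natCast (ε ^ ((2:ℝ)/3)) 3, ← Real.rpow_mul hε.le,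
        show ((2:ℝ)/3*((3:ℕ):ℝ)) = ((2:ℕ):ℝ) by push_cast; norm_num, Real.rpow_natCast]
    calc T^3 = (3/4)^3 * (c ^ ((1:ℝ)/3))^(3:ℕ) * (ε ^ ((2:ℝ)/3))^(3:ℕ) := by
          rw [hTdef]; ring
      _ = 27/64 * c * ε^2 := by rw [ha, hb]; norm_num
  have hdisc : 4*(-4*δ/(1+κ))^3 + 27*(2*κ*ε/(1-κ^2))^2
      = (108*κ^2*ε^2*(1+κ) - 256*δ^3*(1-κ)^2)/((1+κ)^3*(1-κ)^2) := by
    field_simp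
    ring
  have hDpos : (0:ℝ) < (1+κ)^3*(1-κ)^2 := by positivity
  have h5 : 27/64*(κ^2*(κ+1)/(κ-1)^2)*ε^2*(κ-1)^2 = 27/64*(κ^2*(κ+1))*ε^2 := by
    field_simp
  constructor
  · intro hδ
    rw [hsetEq]
    apply count_three hq
    have hδ3 : T^3 < δ^3 := pow_lt_pow_left₀ hδ hT0.le (by norm_num)
    rw [hT3, hcdef] at hδ3
    have h4 := mul_lt_mul_of_pos_right hδ3 h2
    rw [hdisc]
    apply div_neg_of_neg_of_pos _ hDpos
    nlinarith [h4, h5]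
  · intro hδ
    rw [hsetEq]
    apply count_one hq
    have hδ3 : δ^3 < T^3 := by
      rcases le_or_gt δ 0 with h | h
      · have h6 : δ^3 ≤ 0 := by nlinarith [sq_nonneg δ]
        linarith [pow_pos hT0 3]
      · exact pow_lt_pow_left₀ hδ h.le (by norm_num)
    rw [hT3, hcdef] at hδ3
    have h4 := mul_lt_mul_of_pos_right hδ3 h2
    rw [hdisc]
    apply div_pos _ hDpos
    nlinarith [h4, h5]
end

section
/- Let 0 < κ < 1 and let δ, ε be real numbers. Then the planar Hamiltonian H(X,Y) = (δ/2)(X²+Y²) + (Ω₂/8)(X²+Y²)² + (A/4)(X⁴ − 6X²Y² + Y⁴) + (ε/2)X, with Ω₂ = −(1+3κ)/8 and A = (1−κ)/16, has at most six critical points (X,Y) with Y ≠ 0. -/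
open Polynomial

/-- For 0 < κ < 1, the planar Hamiltonian H has at most six critical points
    (X,Y) with Y ≠ 0. -/
theorem stmt_7 (δ ε κ Ω₂ A : ℝ) (hκ0 : 0 < κ) (hκ1 : κ < 1)
    (hΩ₂ : Ω₂ = -(1 + 3 * κ) / 8) (hA : A = (1 - κ) / 16)
    (H : ℝ → ℝ → ℝ)
    (hH : ∀ X Y : ℝ, H X Y =
      δ / 2 * (X ^ 2 + Y ^ 2) + Ω₂ / 8 * (X ^ 2 + Y ^ 2) ^ 2 +
        A / 4 * (X ^ 4 - 6 * X ^ 2 * Y ^ 2 + Y ^ 4) + ε / 2 * X) :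
    ∃ S : Finset (ℝ × ℝ), S.card ≤ 6 ∧
      ∀ q : ℝ × ℝ, q.2 ≠ 0 →
        deriv (fun x : ℝ => H x q.2) q.1 = 0 →
        deriv (fun y : ℝ => H q.1 y) q.2 = 0 → q ∈ S := by
  have hκ : κ ≠ 0 := ne_of_gt hκ0
  have hlead : 1 - κ ^ 2 ≠ 0 := by nlinarith
  set p : ℝ[X] := C (1 - κ ^ 2) * X ^ 3 + C (4 * δ * (κ - 1)) * X + C (2 * κ * ε) with hp
  have hpdeg : p.natDegree = 3 := by
    rw [hp]; compute_degree!
  have hpne : p ≠ 0 := by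
    intro h; rw [h] at hpdeg; simp at hpdeg
  set R := p.roots.toFinset with hR
  refine ⟨R.biUnion (fun x =>
    {(x, Real.sqrt ((4 * δ - x ^ 2) / κ)), (x, -Real.sqrt ((4 * δ - x ^ 2) / κ))}), ?_, ?_⟩
  · refine le_trans Finset.card_biUnion_le ?_
    have hb : ∀ x ∈ R, ({(x, Real.sqrt ((4 * δ - x ^ 2) / κ)),
        (x, -Real.sqrt ((4 * δ - x ^ 2) / κ))} : Finset (ℝ × ℝ)).card ≤ 2 :=
      fun x _ => (Finset.card_insert_le _ _).trans (by simp)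
    have hsum := Finset.sum_le_sum hb
    rw [Finset.sum_const, smul_eq_mul] at hsum
    have h1 : R.card ≤ Multiset.card p.roots := p.roots.toFinset_card_le
    have h2 : Multiset.card p.roots ≤ p.natDegree := p.card_roots'
    omega
  · rintro ⟨X, Y⟩ hY h1 h2
    simp only at hY h1 h2 ⊢
    -- x-derivative
    have hfx : (fun x : ℝ => H x Y) = (fun t : ℝ =>
        δ / 2 * (t ^ 2 + Y ^ 2) + Ω₂ / 8 * (t ^ 2 + Y ^ 2) ^ 2 +
          A / 4 * (t ^ 4 - 6 * t ^ 2 * Y ^ 2 + Y ^ 4) + ε / 2 * t) :=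
      funext fun t => hH t Y
    have dX : HasDerivAt (fun t : ℝ =>
        δ / 2 * (t ^ 2 + Y ^ 2) + Ω₂ / 8 * (t ^ 2 + Y ^ 2) ^ 2 +
          A / 4 * (t ^ 4 - 6 * t ^ 2 * Y ^ 2 + Y ^ 4) + ε / 2 * t)
        (δ * X + Ω₂ / 2 * (X ^ 2 + Y ^ 2) * X + A * (X ^ 3 - 3 * X * Y ^ 2) + ε / 2) X := by
      have h := (((((hasDerivAt_pow 2 X).add_const (Y ^ 2)).const_mul (δ / 2)).add
          ((((hasDerivAt_pow 2 X).add_const (Y ^ 2)).pow 2).const_mul (Ω₂ / 8))).add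
          ((((hasDerivAt_pow 4 X).sub
            (((hasDerivAt_pow 2 X).const_mul 6).mul_const (Y ^ 2))).add_const (Y ^ 4)).const_mul
            (A / 4))).add ((hasDerivAt_id X).const_mul (ε / 2))
      refine h.congr_deriv ?_
      push_cast; ring
    have E1 : δ * X + Ω₂ / 2 * (X ^ 2 + Y ^ 2) * X + A * (X ^ 3 - 3 * X * Y ^ 2) + ε / 2 = 0 := by
      rw [hfx, dX.deriv] at h1; exact h1
    -- y-derivative
    have hfy : (fun y : ℝ => H X y) = (fun t : ℝ =>
        δ / 2 * (X ^ 2 + t ^ 2) + Ω₂ / 8 * (X ^ 2 + t ^ 2) ^ 2 +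
          A / 4 * (X ^ 4 - 6 * X ^ 2 * t ^ 2 + t ^ 4) + ε / 2 * X) :=
      funext fun t => hH X t
    have dY : HasDerivAt (fun t : ℝ =>
        δ / 2 * (X ^ 2 + t ^ 2) + Ω₂ / 8 * (X ^ 2 + t ^ 2) ^ 2 +
          A / 4 * (X ^ 4 - 6 * X ^ 2 * t ^ 2 + t ^ 4) + ε / 2 * X)
        (δ * Y + Ω₂ / 2 * (X ^ 2 + Y ^ 2) * Y + A * (Y ^ 3 - 3 * X ^ 2 * Y)) Y := by
      have h := (((((hasDerivAt_pow 2 Y).const_add (X ^ 2)).const_mul (δ / 2)).add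
          ((((hasDerivAt_pow 2 Y).const_add (X ^ 2)).pow 2).const_mul (Ω₂ / 8))).add
          (((((hasDerivAt_pow 2 Y).const_mul (6 * X ^ 2)).const_sub (X ^ 4)).add
            (hasDerivAt_pow 4 Y)).const_mul (A / 4))).add_const (ε / 2 * X)
      refine h.congr_deriv ?_
      push_cast; ring
    have E2 : δ * Y + Ω₂ / 2 * (X ^ 2 + Y ^ 2) * Y + A * (Y ^ 3 - 3 * X ^ 2 * Y) = 0 := by
      rw [hfy, dY.deriv] at h2; exact h2
    -- factor out Y in E2
    have hg : δ + Ω₂ / 2 * (X ^ 2 + Y ^ 2) + A * (Y ^ 2 - 3 * X ^ 2) = 0 := by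
      have hmul : Y * (δ + Ω₂ / 2 * (X ^ 2 + Y ^ 2) + A * (Y ^ 2 - 3 * X ^ 2)) = 0 := by
        linear_combination E2
      rcases mul_eq_zero.1 hmul with h | h
      · exact absurd h hY
      · exact h
    subst hΩ₂ hA
    have hY2 : κ * Y ^ 2 = 4 * δ - X ^ 2 := by linear_combination -4 * hg
    have hroot : X ∈ R := by
      rw [hR, Multiset.mem_toFinset, mem_roots hpne]
      show p.IsRoot X
      rw [hp]
      simp only [IsRoot.def, eval_add, eval_mul, eval_pow, eval_C, eval_X]
      linear_combination 4 * κ * E1 + X * hY2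
    have hYsq : (4 * δ - X ^ 2) / κ = Y ^ 2 := by
      field_simp; linarith [hY2]
    have hsq : Real.sqrt ((4 * δ - X ^ 2) / κ) = |Y| := by
      rw [hYsq, Real.sqrt_sq_eq_abs]
    rw [Finset.mem_biUnion]
    refine ⟨X, hroot, ?_⟩
    simp only [Finset.mem_insert, Finset.mem_singleton, Prod.mk.injEq]
    rcases abs_cases Y with ⟨ha, _⟩ | ⟨ha, _⟩
    · exact Or.inl ⟨trivial, by rw [hsq, ha]⟩
    · exact Or.inr ⟨trivial, by rw [hsq, ha]; ring⟩
end
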